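/- In the two-period static binary response panel model (γ = 0) with U independent of Z, a pair (β, G_U) is in the identified set if and only if for almost every z: P[Y=(0,1)|Z=z] ≤ G_U({u : Δu ≥ -Δzβ}) and P[Y=(1,0)|Z=z] ≤ G_U({u : Δu ≤ -Δzβ}); in particular the inequalities arising from the unions of the two nontrivial U* sets are redundant because those unions equal ℝ² or are probabilities of disjoint containment events summing appropriately. -/

import Mathlib

open scoped BigOperators
open MeasureTheory

def dot {k : ℕ} (x y : Fin k → ℝ) : ℝ := ∑ i, x i * y i

/-- `U*` set in the static two-period binary response panel (γ = 0):
values of `u` for which some fixed effect `v ∈ ℝ` rationalizes the outcome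
`y = (y₁, y₂) ∈ {0,1}²` given covariates `z = (z₁, z₂)`. -/
def UstarSBP2 {k : ℕ} (β : Fin k → ℝ) (z : Fin 2 → Fin k → ℝ)
    (y : Fin 2 → Bool) : Set (Fin 2 → ℝ) :=
  {u | ∃ v : ℝ, ∀ t : Fin 2,
    (y t = true → 0 ≤ dot (z t) β + v + u t) ∧
    (y t = false → dot (z t) β + v + u t ≤ 0)}

lemma ust_ff {k : ℕ} (β : Fin k → ℝ) (z : Fin 2 → Fin k → ℝ) :
    UstarSBP2 β z ![false, false] = Set.univ := by
  ext u
  simp only [UstarSBP2, Set.mem_setOf_eq, Set.mem_univ, iff_true, Fin.forall_fin_two,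
    Matrix.cons_val_zero, Matrix.cons_val_one, Matrix.head_cons]
  refine ⟨min (-(dot (z 0) β + u 0)) (-(dot (z 1) β + u 1)),
    ⟨fun hh => Bool.noConfusion hh, fun _ => ?_⟩,
    fun hh => Bool.noConfusion hh, fun _ => ?_⟩
  · have := min_le_left (-(dot (z 0) β + u 0)) (-(dot (z 1) β + u 1)); linarith
  · have := min_le_right (-(dot (z 0) β + u 0)) (-(dot (z 1) β + u 1)); linarith

lemma ust_tt {k : ℕ} (β : Fin k → ℝ) (z : Fin 2 → Fin k → ℝ) :
    UstarSBP2 β z ![true, true] = Set.univ := by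
  ext u
  simp only [UstarSBP2, Set.mem_setOf_eq, Set.mem_univ, iff_true, Fin.forall_fin_two,
    Matrix.cons_val_zero, Matrix.cons_val_one, Matrix.head_cons]
  refine ⟨max (-(dot (z 0) β + u 0)) (-(dot (z 1) β + u 1)),
    ⟨fun _ => ?_, fun hh => Bool.noConfusion hh⟩,
    fun _ => ?_, fun hh => Bool.noConfusion hh⟩
  · have := le_max_left (-(dot (z 0) β + u 0)) (-(dot (z 1) β + u 1)); linarith
  · have := le_max_right (-(dot (z 0) β + u 0)) (-(dot (z 1) β + u 1)); linarith

lemma ust_ft {k : ℕ} (β : Fin k → ℝ) (z : Fin 2 → Fin k → ℝ) :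
    UstarSBP2 β z ![false, true] =
      {u | u 1 - u 0 ≥ -(dot (z 1) β - dot (z 0) β)} := by
  ext u
  simp only [UstarSBP2, Set.mem_setOf_eq, Fin.forall_fin_two,
    Matrix.cons_val_zero, Matrix.cons_val_one, Matrix.head_cons, ge_iff_le]
  constructor
  · rintro ⟨v, ⟨-, h2⟩, h3, -⟩
    have a := h2 trivial
    have b := h3 trivial
    linarith
  · intro h
    exact ⟨-(dot (z 0) β + u 0),
      ⟨fun hh => Bool.noConfusion hh, fun _ => by linarith⟩,
      fun _ => by linarith, fun hh => Bool.noConfusion hh⟩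

lemma ust_tf {k : ℕ} (β : Fin k → ℝ) (z : Fin 2 → Fin k → ℝ) :
    UstarSBP2 β z ![true, false] =
      {u | u 1 - u 0 ≤ -(dot (z 1) β - dot (z 0) β)} := by
  ext u
  simp only [UstarSBP2, Set.mem_setOf_eq, Fin.forall_fin_two,
    Matrix.cons_val_zero, Matrix.cons_val_one, Matrix.head_cons]
  constructor
  · rintro ⟨v, ⟨h1, -⟩, -, h4⟩
    have a := h1 trivial
    have b := h4 trivial
    linarith
  · intro h
    exact ⟨-(dot (z 1) β + u 1),
      ⟨fun _ => by linarith, fun hh => Bool.noConfusion hh⟩,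
      fun hh => Bool.noConfusion hh, fun _ => by linarith⟩

lemma bool_pair (y : Fin 2 → Bool) : y = ![y 0, y 1] := by
  funext i; fin_cases i <;> rfl

theorem static_binary_two_period_identified_set {k : ℕ} {ζ : Type*}
    (β : Fin k → ℝ) (RZ : Set ζ) (z : ζ → Fin 2 → Fin k → ℝ)
    (FY : ζ → Measure (Fin 2 → Bool)) (hFY : ∀ zv, IsProbabilityMeasure (FY zv))
    (GU : Measure (Fin 2 → ℝ)) [IsProbabilityMeasure GU] :
    (∀ zv ∈ RZ, ∀ S : Set (Fin 2 → ℝ), IsClosed S →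
        FY zv {y | UstarSBP2 β (z zv) y ⊆ S} ≤ GU S) ↔
    (∀ zv ∈ RZ,
        FY zv {![false, true]} ≤
          GU {u | u 1 - u 0 ≥ -(dot (z zv 1) β - dot (z zv 0) β)} ∧
        FY zv {![true, false]} ≤
          GU {u | u 1 - u 0 ≤ -(dot (z zv 1) β - dot (z zv 0) β)}) := by
  constructor
  · intro h zv hzv
    set c : ℝ := -(dot (z zv 1) β - dot (z zv 0) β) with hc
    constructor
    · have hcl : IsClosed {u : Fin 2 → ℝ | u 1 - u 0 ≥ c} :=
        isClosed_le continuous_const ((continuous_apply 1).sub (continuous_apply 0))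
      refine le_trans (measure_mono ?_) (h zv hzv _ hcl)
      intro y hy
      simp only [Set.mem_singleton_iff] at hy
      subst hy
      rw [Set.mem_setOf_eq, ust_ft]
    · have hcl : IsClosed {u : Fin 2 → ℝ | u 1 - u 0 ≤ c} :=
        isClosed_le ((continuous_apply 1).sub (continuous_apply 0)) continuous_const
      refine le_trans (measure_mono ?_) (h zv hzv _ hcl)
      intro y hy
      simp only [Set.mem_singleton_iff] at hy
      subst hy
      rw [Set.mem_setOf_eq, ust_tf]
  · intro h zv hzv S _hS
    haveI := hFY zv
    set c : ℝ := -(dot (z zv 1) β - dot (z zv 0) β) with hc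
    set Hp : Set (Fin 2 → ℝ) := {u | u 1 - u 0 ≥ c} with hHp
    set Hm : Set (Fin 2 → ℝ) := {u | u 1 - u 0 ≤ c} with hHm
    by_cases hU : S = Set.univ
    · subst hU
      calc FY zv {y | UstarSBP2 β (z zv) y ⊆ Set.univ} ≤ 1 := prob_le_one
        _ = GU Set.univ := (measure_univ).symm
    · have hunion : Hp ∪ Hm = Set.univ := by
        ext u
        simp only [Set.mem_union, hHp, hHm, Set.mem_setOf_eq, Set.mem_univ, iff_true,
          ge_iff_le]
        exact le_total c (u 1 - u 0)
      have hnotboth : ¬ (Hp ⊆ S ∧ Hm ⊆ S) := by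
        rintro ⟨h1, h2⟩
        exact hU (Set.eq_univ_of_univ_subset (hunion ▸ Set.union_subset h1 h2))
      have hyft : ∀ y : Fin 2 → Bool, UstarSBP2 β (z zv) y ⊆ S →
          (y = ![false, true] ∧ Hp ⊆ S) ∨ (y = ![true, false] ∧ Hm ⊆ S) := by
        intro y hy
        rw [bool_pair y] at hy ⊢
        match h0 : y 0, h1 : y 1 with
        | false, false =>
          rw [h0, h1, ust_ff] at hy
          exact absurd (Set.eq_univ_of_univ_subset hy) hU
        | true, true =>
          rw [h0, h1, ust_tt] at hy
          exact absurd (Set.eq_univ_of_univ_subset hy) hU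
        | false, true =>
          rw [h0, h1, ust_ft] at hy
          exact Or.inl ⟨rfl, hy⟩
        | true, false =>
          rw [h0, h1, ust_tf] at hy
          exact Or.inr ⟨rfl, hy⟩
      by_cases hp : Hp ⊆ S
      · have hA : {y | UstarSBP2 β (z zv) y ⊆ S} ⊆ {![false, true]} := by
          intro y hy
          rcases hyft y hy with ⟨hy1, _⟩ | ⟨_, hm⟩
          · exact hy1
          · exact absurd ⟨hp, hm⟩ hnotboth
        calc FY zv {y | UstarSBP2 β (z zv) y ⊆ S} ≤ FY zv {![false, true]} :=
              measure_mono hA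
          _ ≤ GU Hp := (h zv hzv).1
          _ ≤ GU S := measure_mono hp
      · by_cases hm : Hm ⊆ S
        · have hA : {y | UstarSBP2 β (z zv) y ⊆ S} ⊆ {![true, false]} := by
            intro y hy
            rcases hyft y hy with ⟨_, hp'⟩ | ⟨hy1, _⟩
            · exact absurd hp' hp
            · exact hy1
          calc FY zv {y | UstarSBP2 β (z zv) y ⊆ S} ≤ FY zv {![true, false]} :=
                measure_mono hA
            _ ≤ GU Hm := (h zv hzv).2
            _ ≤ GU S := measure_mono hm
        · have hA : {y | UstarSBP2 β (z zv) y ⊆ S} = ∅ := by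
            ext y
            simp only [Set.mem_setOf_eq, Set.mem_empty_iff_false, iff_false]
            intro hy
            rcases hyft y hy with ⟨_, hp'⟩ | ⟨_, hm'⟩
            · exact hp hp'
            · exact hm hm'
          rw [hA, measure_empty]
          exact zero_le
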